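/- Define, for real α_0, α_1, α_2, α_3 > 0 with α_4 := 1 − α_0 − α_1 − α_2 − α_3 > 0 and c = 4, b(c, α_0, α_1, α_2, α_3) = (∏_{i=0}^{4} α_i^{−α_i}) · e^{c(α_0 α_4 − 1/2)} · (e^{cα_0}−1)^{α_1} (e^{cα_1}−1)^{α_2} (e^{cα_2}−1)^{α_3} (e^{cα_3}−1)^{α_4} · (1 − e^{−α_3/α_2} e^{−cα_3})^{α_2}. Then at every point with 0.06 ≤ α_i ≤ 0.6 for i = 0,1,2,3,4, the logarithmic partial derivatives satisfy |(1/b)·∂b/∂α_i| < 30 for each i = 0,1,2,3 (where b is viewed as a function of α_0, α_1, α_2, α_3 with α_4 = 1 − α_0 − α_1 − α_2 − α_3). -/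

import Mathlib

open Real

set_option maxHeartbeats 1000000



/-- The function `b(4, α₀, α₁, α₂, α₃)` from the first-moment bound for homomorphisms of
`G_{n,4/n}` to `C₅`, with `c = 4` and `α₄ = 1 - α₀ - α₁ - α₂ - α₃`. -/
noncomputable def bfun (a0 a1 a2 a3 : ℝ) : ℝ :=
  let c : ℝ := 4
  let a4 : ℝ := 1 - a0 - a1 - a2 - a3
  a0 ^ (-a0) * a1 ^ (-a1) * a2 ^ (-a2) * a3 ^ (-a3) * a4 ^ (-a4) *
    Real.exp (c * (a0 * a4 - 1 / 2)) *
    (Real.exp (c * a0) - 1) ^ a1 * (Real.exp (c * a1) - 1) ^ a2 *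
    (Real.exp (c * a2) - 1) ^ a3 * (Real.exp (c * a3) - 1) ^ a4 *
    (1 - Real.exp (-a3 / a2) * Real.exp (-c * a3)) ^ a2

noncomputable def Ffun (a0 a1 a2 a3 : ℝ) : ℝ :=
  -(a0 * Real.log a0) - a1 * Real.log a1 - a2 * Real.log a2 - a3 * Real.log a3 -
    (1 - a0 - a1 - a2 - a3) * Real.log (1 - a0 - a1 - a2 - a3) +
    4 * (a0 * (1 - a0 - a1 - a2 - a3) - 1 / 2) +
    a1 * Real.log (Real.exp (4 * a0) - 1) + a2 * Real.log (Real.exp (4 * a1) - 1) +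
    a3 * Real.log (Real.exp (4 * a2) - 1) +
    (1 - a0 - a1 - a2 - a3) * Real.log (Real.exp (4 * a3) - 1) +
    a2 * Real.log (1 - Real.exp (-a3 / a2) * Real.exp (-4 * a3))

lemma expm_pos {t : ℝ} (h : 0 < t) : 0 < Real.exp (4 * t) - 1 := by
  have := Real.add_one_le_exp (4 * t); linarith

lemma lastbase_pos {a2 a3 : ℝ} (h2 : 0 < a2) (h3 : 0 < a3) :
    0 < 1 - Real.exp (-a3 / a2) * Real.exp (-4 * a3) := by
  rw [← Real.exp_add]
  have : -a3 / a2 + -4 * a3 < 0 := by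
    have : 0 < a3 / a2 := div_pos h3 h2
    rw [neg_div]; linarith
  have := Real.exp_lt_one_iff.2 this
  linarith

lemma bfun_eq {a0 a1 a2 a3 : ℝ} (h0 : 0 < a0) (h1 : 0 < a1) (h2 : 0 < a2) (h3 : 0 < a3)
    (h4 : 0 < 1 - a0 - a1 - a2 - a3) :
    bfun a0 a1 a2 a3 = Real.exp (Ffun a0 a1 a2 a3) := by
  have e0 := expm_pos h0
  have e1 := expm_pos h1
  have e2 := expm_pos h2
  have e3 := expm_pos h3
  have eL := lastbase_pos h2 h3
  simp only [bfun, Ffun]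
  rw [Real.rpow_def_of_pos h0, Real.rpow_def_of_pos h1, Real.rpow_def_of_pos h2,
    Real.rpow_def_of_pos h3, Real.rpow_def_of_pos h4, Real.rpow_def_of_pos e0,
    Real.rpow_def_of_pos e1, Real.rpow_def_of_pos e2, Real.rpow_def_of_pos e3,
    Real.rpow_def_of_pos eL]
  simp only [← Real.exp_add]
  norm_num
  ring_nf

lemma exp3_lb : (50 : ℝ) / 3 ≤ Real.exp 3 := by
  have h := Real.sum_le_exp_of_nonneg (by norm_num : (0:ℝ) ≤ 3) 7
  simp [Finset.sum_range_succ] at h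
  norm_num [Nat.factorial] at h
  linarith

lemma exp15_lb : (67 : ℝ) / 16 ≤ Real.exp 1.5 := by
  have h := Real.sum_le_exp_of_nonneg (by norm_num : (0:ℝ) ≤ 1.5) 6
  simp [Finset.sum_range_succ] at h
  norm_num [Nat.factorial] at h
  linarith

-- log bounds for x in [0.06, 0.6]
lemma log_bnd {x : ℝ} (h : 0.06 ≤ x) (h' : x ≤ 0.6) : -3 ≤ Real.log x ∧ Real.log x ≤ 0 := by
  constructor
  · rw [Real.le_log_iff_exp_le (by linarith)]
    have h3 := exp3_lb
    have : Real.exp (-3) = (Real.exp 3)⁻¹ := by rw [← Real.exp_neg]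
    rw [this]
    rw [inv_le_iff_one_le_mul₀ (by positivity)]
    nlinarith [Real.exp_pos 3]
  · exact Real.log_nonpos (by linarith) (by linarith)

-- bounds on log (exp (4 t) - 1) for t in [0.06, 0.6]
lemma logE_bnd {t : ℝ} (h : 0.06 ≤ t) (h' : t ≤ 0.6) :
    -1.5 ≤ Real.log (Real.exp (4 * t) - 1) ∧ Real.log (Real.exp (4 * t) - 1) ≤ 2.4 := by
  have hgt : (0.24 : ℝ) ≤ Real.exp (4 * t) - 1 := by
    have := Real.add_one_le_exp (4 * t); linarith
  constructor
  · rw [Real.le_log_iff_exp_le (by linarith)]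
    have h15 := exp15_lb
    have : Real.exp (-1.5) = (Real.exp 1.5)⁻¹ := by rw [← Real.exp_neg]
    rw [this, inv_le_iff_one_le_mul₀ (by positivity)]
    nlinarith [Real.exp_pos (1.5:ℝ)]
  · rw [Real.log_le_iff_le_exp (by linarith)]
    have : Real.exp (4 * t) ≤ Real.exp 2.4 := Real.exp_le_exp.2 (by linarith)
    linarith

-- the ratio bound
lemma ratio_bnd {t : ℝ} (h : 0.06 ≤ t) :
    0 ≤ 4 * Real.exp (4 * t) / (Real.exp (4 * t) - 1) ∧
    4 * Real.exp (4 * t) / (Real.exp (4 * t) - 1) ≤ 62 / 3 := by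
  have hgt : (0.24 : ℝ) ≤ Real.exp (4 * t) - 1 := by
    have := Real.add_one_le_exp (4 * t); linarith
  constructor
  · positivity
  · rw [div_le_iff₀ (by linarith)]
    nlinarith [Real.exp_pos (4*t)]
lemma hasDerivAt_F0 {a0 a1 a2 a3 : ℝ} (h0 : 0 < a0) (h4 : 0 < 1 - a0 - a1 - a2 - a3) :
    HasDerivAt (fun t => Ffun t a1 a2 a3)
      (Real.log (1 - a0 - a1 - a2 - a3) - Real.log a0 +
        4 * ((1 - a0 - a1 - a2 - a3) - a0) +
        a1 * (4 * Real.exp (4 * a0) / (Real.exp (4 * a0) - 1)) -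
        Real.log (Real.exp (4 * a3) - 1)) a0 := by
  have e0 := expm_pos h0
  have hu : HasDerivAt (fun t : ℝ => 1 - t - a1 - a2 - a3) (-1) a0 := by
    simpa using (((hasDerivAt_id a0).const_sub (1:ℝ)).sub_const a1).sub_const a2 |>.sub_const a3
  have p1 : HasDerivAt (fun t : ℝ => t * Real.log t) (1 * Real.log a0 + a0 * (1 / a0)) a0 :=
    (hasDerivAt_id a0).mul ((hasDerivAt_id a0).log h0.ne')
  have p2 : HasDerivAt (fun t : ℝ => (1 - t - a1 - a2 - a3) * Real.log (1 - t - a1 - a2 - a3))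
      ((-1) * Real.log (1 - a0 - a1 - a2 - a3) + (1 - a0 - a1 - a2 - a3) * (-1 / (1 - a0 - a1 - a2 - a3))) a0 :=
    hu.mul (hu.log h4.ne')
  have p3 : HasDerivAt (fun t : ℝ => 4 * (t * (1 - t - a1 - a2 - a3) - 1 / 2))
      (4 * (1 * (1 - a0 - a1 - a2 - a3) + a0 * (-1))) a0 :=
    (((hasDerivAt_id a0).mul hu).sub_const (1/2)).const_mul 4
  have p4 : HasDerivAt (fun t : ℝ => a1 * Real.log (Real.exp (4 * t) - 1))
      (a1 * (Real.exp (4 * a0) * (4 * 1) / (Real.exp (4 * a0) - 1))) a0 :=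
    (((((hasDerivAt_id a0).const_mul 4).exp).sub_const 1).log e0.ne').const_mul a1
  have p5 : HasDerivAt (fun t : ℝ => (1 - t - a1 - a2 - a3) * Real.log (Real.exp (4 * a3) - 1))
      ((-1) * Real.log (Real.exp (4 * a3) - 1)) a0 := hu.mul_const _
  have h := ((((((((p1.neg.sub_const (a1 * Real.log a1)).sub_const
      (a2 * Real.log a2)).sub_const (a3 * Real.log a3)).sub p2).add p3).add p4).add_const
      (a2 * Real.log (Real.exp (4 * a1) - 1))).add_const
      (a3 * Real.log (Real.exp (4 * a2) - 1))).add p5 |>.add_const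
      (a2 * Real.log (1 - Real.exp (-a3 / a2) * Real.exp (-4 * a3)))
  refine h.congr_deriv ?_
  field_simp
  ring
lemma aux_p7a (a2 a3 c1 c2 D : ℝ) (h : a2 ≠ 0) (hD : D ≠ 0) :
    1 * Real.log D + a2 * (-(c1 * ((0 * a2 - -a3 * 1) / a2 ^ 2) * c2) / D) =
      Real.log D - a3 / a2 * (c1 * c2 / D) := by
  field_simp
  ring

lemma aux_p7b (a2 c1 c2 D : ℝ) (h : a2 ≠ 0) (hD : D ≠ 0) :
    a2 * (-(c1 * (-1 / a2) * c2 + c1 * (c2 * (-4))) / D) = (1 + 4 * a2) * (c1 * c2 / D) := by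
  field_simp
  ring

lemma hasDerivAt_F1 {a0 a1 a2 a3 : ℝ} (h1 : 0 < a1) (h4 : 0 < 1 - a0 - a1 - a2 - a3) :
    HasDerivAt (fun t => Ffun a0 t a2 a3)
      (Real.log (1 - a0 - a1 - a2 - a3) - Real.log a1 - 4 * a0 +
        Real.log (Real.exp (4 * a0) - 1) +
        a2 * (4 * Real.exp (4 * a1) / (Real.exp (4 * a1) - 1)) -
        Real.log (Real.exp (4 * a3) - 1)) a1 := by
  have e1 := expm_pos h1
  have hu : HasDerivAt (fun t : ℝ => 1 - a0 - t - a2 - a3) (-1) a1 := by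
    have := (((hasDerivAt_id a1).const_sub ((1:ℝ) - a0)).sub_const a2).sub_const a3
    exact this
  have p1 : HasDerivAt (fun t : ℝ => t * Real.log t) (1 * Real.log a1 + a1 * (1 / a1)) a1 :=
    (hasDerivAt_id a1).mul ((hasDerivAt_id a1).log h1.ne')
  have p2 : HasDerivAt (fun t : ℝ => (1 - a0 - t - a2 - a3) * Real.log (1 - a0 - t - a2 - a3))
      ((-1) * Real.log (1 - a0 - a1 - a2 - a3) + (1 - a0 - a1 - a2 - a3) * (-1 / (1 - a0 - a1 - a2 - a3))) a1 :=
    hu.mul (hu.log h4.ne')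
  have p3 : HasDerivAt (fun t : ℝ => 4 * (a0 * (1 - a0 - t - a2 - a3) - 1 / 2))
      (4 * (a0 * (-1))) a1 := ((hu.const_mul a0).sub_const (1/2)).const_mul 4
  have p4 : HasDerivAt (fun t : ℝ => t * Real.log (Real.exp (4 * a0) - 1))
      (Real.log (Real.exp (4 * a0) - 1)) a1 := by
    simpa using (hasDerivAt_id a1).mul_const (Real.log (Real.exp (4 * a0) - 1))
  have p5 : HasDerivAt (fun t : ℝ => a2 * Real.log (Real.exp (4 * t) - 1))
      (a2 * (Real.exp (4 * a1) * (4 * 1) / (Real.exp (4 * a1) - 1))) a1 :=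
    (((((hasDerivAt_id a1).const_mul 4).exp).sub_const 1).log e1.ne').const_mul a2
  have p6 : HasDerivAt (fun t : ℝ => (1 - a0 - t - a2 - a3) * Real.log (Real.exp (4 * a3) - 1))
      ((-1) * Real.log (Real.exp (4 * a3) - 1)) a1 := hu.mul_const _
  have h := (((((((((hasDerivAt_const a1 (-(a0 * Real.log a0))).sub p1).sub_const
      (a2 * Real.log a2)).sub_const (a3 * Real.log a3)).sub p2).add p3).add p4).add p5).add_const
      (a3 * Real.log (Real.exp (4 * a2) - 1))).add p6 |>.add_const
      (a2 * Real.log (1 - Real.exp (-a3 / a2) * Real.exp (-4 * a3)))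
  refine h.congr_deriv ?_
  field_simp
  ring

lemma hasDerivAt_F2 {a0 a1 a2 a3 : ℝ} (h2 : 0 < a2) (h3 : 0 < a3)
    (h4 : 0 < 1 - a0 - a1 - a2 - a3) :
    HasDerivAt (fun t => Ffun a0 a1 t a3)
      (Real.log (1 - a0 - a1 - a2 - a3) - Real.log a2 - 4 * a0 +
        Real.log (Real.exp (4 * a1) - 1) +
        a3 * (4 * Real.exp (4 * a2) / (Real.exp (4 * a2) - 1)) -
        Real.log (Real.exp (4 * a3) - 1) +
        Real.log (1 - Real.exp (-a3 / a2) * Real.exp (-4 * a3)) -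
        (a3 / a2) * (Real.exp (-a3 / a2) * Real.exp (-4 * a3) /
          (1 - Real.exp (-a3 / a2) * Real.exp (-4 * a3)))) a2 := by
  have e2 := expm_pos h2
  have eL := lastbase_pos h2 h3
  have hu : HasDerivAt (fun t : ℝ => 1 - a0 - a1 - t - a3) (-1) a2 := by
    have := ((hasDerivAt_id a2).const_sub ((1:ℝ) - a0 - a1)).sub_const a3
    exact this
  have p1 : HasDerivAt (fun t : ℝ => t * Real.log t) (1 * Real.log a2 + a2 * (1 / a2)) a2 :=
    (hasDerivAt_id a2).mul ((hasDerivAt_id a2).log h2.ne')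
  have p2 : HasDerivAt (fun t : ℝ => (1 - a0 - a1 - t - a3) * Real.log (1 - a0 - a1 - t - a3))
      ((-1) * Real.log (1 - a0 - a1 - a2 - a3) + (1 - a0 - a1 - a2 - a3) * (-1 / (1 - a0 - a1 - a2 - a3))) a2 :=
    hu.mul (hu.log h4.ne')
  have p3 : HasDerivAt (fun t : ℝ => 4 * (a0 * (1 - a0 - a1 - t - a3) - 1 / 2))
      (4 * (a0 * (-1))) a2 := ((hu.const_mul a0).sub_const (1/2)).const_mul 4
  have p4 : HasDerivAt (fun t : ℝ => t * Real.log (Real.exp (4 * a1) - 1))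
      (Real.log (Real.exp (4 * a1) - 1)) a2 := by
    simpa using (hasDerivAt_id a2).mul_const (Real.log (Real.exp (4 * a1) - 1))
  have p5 : HasDerivAt (fun t : ℝ => a3 * Real.log (Real.exp (4 * t) - 1))
      (a3 * (Real.exp (4 * a2) * (4 * 1) / (Real.exp (4 * a2) - 1))) a2 :=
    (((((hasDerivAt_id a2).const_mul 4).exp).sub_const 1).log e2.ne').const_mul a3
  have p6 : HasDerivAt (fun t : ℝ => (1 - a0 - a1 - t - a3) * Real.log (Real.exp (4 * a3) - 1))
      ((-1) * Real.log (Real.exp (4 * a3) - 1)) a2 := hu.mul_const _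
  -- last term: t * log (1 - exp (-a3 / t) * exp (-4 * a3))
  have q1 : HasDerivAt (fun t : ℝ => -a3 / t)
      ((0 * a2 - (-a3) * 1) / a2 ^ 2) a2 :=
    (hasDerivAt_const a2 (-a3)).div (hasDerivAt_id a2) h2.ne'
  have q2 : HasDerivAt (fun t : ℝ => 1 - Real.exp (-a3 / t) * Real.exp (-4 * a3))
      (-(Real.exp (-a3 / a2) * ((0 * a2 - (-a3) * 1) / a2 ^ 2) * Real.exp (-4 * a3))) a2 :=
    (q1.exp.mul_const (Real.exp (-4 * a3))).const_sub 1
  have p7 : HasDerivAt (fun t : ℝ => t * Real.log (1 - Real.exp (-a3 / t) * Real.exp (-4 * a3)))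
      (1 * Real.log (1 - Real.exp (-a3 / a2) * Real.exp (-4 * a3)) +
        a2 * ((-(Real.exp (-a3 / a2) * ((0 * a2 - (-a3) * 1) / a2 ^ 2) * Real.exp (-4 * a3))) /
          (1 - Real.exp (-a3 / a2) * Real.exp (-4 * a3)))) a2 :=
    (hasDerivAt_id a2).mul (q2.log eL.ne')
  have p1' := p1.congr_deriv (show _ = Real.log a2 + 1 by field_simp)
  have p2' := p2.congr_deriv (show _ = -Real.log (1 - a0 - a1 - a2 - a3) - 1 by field_simp; ring)
  have p5' := p5.congr_deriv
    (show _ = a3 * (4 * Real.exp (4 * a2) / (Real.exp (4 * a2) - 1)) by ring)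
  have p7' := p7.congr_deriv (aux_p7a a2 a3 _ _ _ h2.ne' eL.ne')
  have h := (((((((((hasDerivAt_const a2 (-(a0 * Real.log a0))).sub_const
      (a1 * Real.log a1)).sub p1').sub_const (a3 * Real.log a3)).sub p2').add p3).add_const
      (a1 * Real.log (Real.exp (4 * a0) - 1))).add p4).add p5').add p6 |>.add p7'
  refine h.congr_deriv ?_
  ring

lemma hasDerivAt_F3 {a0 a1 a2 a3 : ℝ} (h2 : 0 < a2) (h3 : 0 < a3)
    (h4 : 0 < 1 - a0 - a1 - a2 - a3) :
    HasDerivAt (fun t => Ffun a0 a1 a2 t)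
      (Real.log (1 - a0 - a1 - a2 - a3) - Real.log a3 - 4 * a0 +
        Real.log (Real.exp (4 * a2) - 1) -
        Real.log (Real.exp (4 * a3) - 1) +
        (1 - a0 - a1 - a2 - a3) * (4 * Real.exp (4 * a3) / (Real.exp (4 * a3) - 1)) +
        (1 + 4 * a2) * (Real.exp (-a3 / a2) * Real.exp (-4 * a3) /
          (1 - Real.exp (-a3 / a2) * Real.exp (-4 * a3)))) a3 := by
  have e3 := expm_pos h3
  have eL := lastbase_pos h2 h3
  have hu : HasDerivAt (fun t : ℝ => 1 - a0 - a1 - a2 - t) (-1) a3 := by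
    have := (hasDerivAt_id a3).const_sub ((1:ℝ) - a0 - a1 - a2)
    exact this
  have p1 : HasDerivAt (fun t : ℝ => t * Real.log t) (1 * Real.log a3 + a3 * (1 / a3)) a3 :=
    (hasDerivAt_id a3).mul ((hasDerivAt_id a3).log h3.ne')
  have p2 : HasDerivAt (fun t : ℝ => (1 - a0 - a1 - a2 - t) * Real.log (1 - a0 - a1 - a2 - t))
      ((-1) * Real.log (1 - a0 - a1 - a2 - a3) + (1 - a0 - a1 - a2 - a3) * (-1 / (1 - a0 - a1 - a2 - a3))) a3 :=
    hu.mul (hu.log h4.ne')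
  have p3 : HasDerivAt (fun t : ℝ => 4 * (a0 * (1 - a0 - a1 - a2 - t) - 1 / 2))
      (4 * (a0 * (-1))) a3 := ((hu.const_mul a0).sub_const (1/2)).const_mul 4
  have p4 : HasDerivAt (fun t : ℝ => t * Real.log (Real.exp (4 * a2) - 1))
      (Real.log (Real.exp (4 * a2) - 1)) a3 := by
    simpa using (hasDerivAt_id a3).mul_const (Real.log (Real.exp (4 * a2) - 1))
  have pe : HasDerivAt (fun t : ℝ => Real.log (Real.exp (4 * t) - 1))
      (Real.exp (4 * a3) * (4 * 1) / (Real.exp (4 * a3) - 1)) a3 :=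
    ((((hasDerivAt_id a3).const_mul 4).exp).sub_const 1).log e3.ne'
  have p5 : HasDerivAt (fun t : ℝ => (1 - a0 - a1 - a2 - t) * Real.log (Real.exp (4 * t) - 1))
      ((-1) * Real.log (Real.exp (4 * a3) - 1) +
        (1 - a0 - a1 - a2 - a3) * (Real.exp (4 * a3) * (4 * 1) / (Real.exp (4 * a3) - 1))) a3 :=
    hu.mul pe
  -- last term: a2 * log (1 - exp (-t / a2) * exp (-4 * t))
  have q1 : HasDerivAt (fun t : ℝ => -t / a2) (-1 / a2) a3 := by
    simpa using ((hasDerivAt_id a3).neg.div_const a2)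
  have qm : HasDerivAt (fun t : ℝ => (-4 : ℝ) * t) (-4) a3 := by
    simpa using (hasDerivAt_id a3).const_mul (-4 : ℝ)
  have q2 : HasDerivAt (fun t : ℝ => Real.exp (-t / a2) * Real.exp (-4 * t))
      (Real.exp (-a3 / a2) * (-1 / a2) * Real.exp (-4 * a3) +
        Real.exp (-a3 / a2) * (Real.exp (-4 * a3) * (-4))) a3 :=
    q1.exp.mul qm.exp
  have q3 : HasDerivAt (fun t : ℝ => 1 - Real.exp (-t / a2) * Real.exp (-4 * t))
      (-(Real.exp (-a3 / a2) * (-1 / a2) * Real.exp (-4 * a3) +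
        Real.exp (-a3 / a2) * (Real.exp (-4 * a3) * (-4)))) a3 := q2.const_sub 1
  have p7 : HasDerivAt (fun t : ℝ => a2 * Real.log (1 - Real.exp (-t / a2) * Real.exp (-4 * t)))
      (a2 * ((-(Real.exp (-a3 / a2) * (-1 / a2) * Real.exp (-4 * a3) +
        Real.exp (-a3 / a2) * (Real.exp (-4 * a3) * (-4)))) /
          (1 - Real.exp (-a3 / a2) * Real.exp (-4 * a3)))) a3 :=
    (q3.log eL.ne').const_mul a2
  have p1' := p1.congr_deriv (show _ = Real.log a3 + 1 by field_simp)
  have p2' := p2.congr_deriv (show _ = -Real.log (1 - a0 - a1 - a2 - a3) - 1 by field_simp; ring)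
  have p5' := p5.congr_deriv (show _ = -Real.log (Real.exp (4 * a3) - 1) +
      (1 - a0 - a1 - a2 - a3) * (4 * Real.exp (4 * a3) / (Real.exp (4 * a3) - 1)) by ring)
  have p7' := p7.congr_deriv (aux_p7b a2 _ _ _ h2.ne' eL.ne')
  have h := (((((((((hasDerivAt_const a3 (-(a0 * Real.log a0))).sub_const
      (a1 * Real.log a1)).sub_const (a2 * Real.log a2)).sub p1').sub p2').add p3).add_const
      (a1 * Real.log (Real.exp (4 * a0) - 1))).add_const
      (a2 * Real.log (Real.exp (4 * a1) - 1))).add p4).add p5' |>.add p7'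
  refine h.congr_deriv ?_
  ring
lemma tail_core {x : ℝ} (hx : 0.34 ≤ x) :
    0 < Real.exp (-x) ∧ 0 < 1 - Real.exp (-x) ∧ 17 / 67 ≤ 1 - Real.exp (-x) ∧
    Real.exp (-x) * (1 + x) ≤ 1 ∧ Real.exp (-x) * (1 + x + x ^ 2 / 2) ≤ 1 := by
  have hxpos : (0:ℝ) < x := by linarith
  have hEpos : 0 < Real.exp (-x) := Real.exp_pos _
  have hEinv : Real.exp (-x) * Real.exp x = 1 := by rw [← Real.exp_add]; simp
  have hquad : 1 + x + x ^ 2 / 2 ≤ Real.exp x := Real.quadratic_le_exp_of_nonneg hxpos.le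
  have hmul : Real.exp (-x) * (1 + x + x ^ 2 / 2) ≤ Real.exp (-x) * Real.exp x :=
    mul_le_mul_of_nonneg_left hquad hEpos.le
  rw [hEinv] at hmul
  have hkey : Real.exp (-x) * (1 + x) ≤ 1 := by
    nlinarith [mul_nonneg hEpos.le (sq_nonneg x)]
  have h1E : 17 / 67 ≤ 1 - Real.exp (-x) := by nlinarith
  exact ⟨hEpos, by linarith, h1E, hkey, hmul⟩

-- facts about E := exp (-a3/a2) * exp (-4 a3)
lemma Efacts {a2 a3 : ℝ} (h2 : 0.06 ≤ a2) (h2' : a2 ≤ 0.6) (h3 : 0.06 ≤ a3) (h3' : a3 ≤ 0.6) :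
    0 < Real.exp (-a3 / a2) * Real.exp (-4 * a3) ∧
    0 < 1 - Real.exp (-a3 / a2) * Real.exp (-4 * a3) ∧
    -1.5 ≤ Real.log (1 - Real.exp (-a3 / a2) * Real.exp (-4 * a3)) ∧
    Real.log (1 - Real.exp (-a3 / a2) * Real.exp (-4 * a3)) ≤ 0 ∧
    0 ≤ (a3 / a2) * (Real.exp (-a3 / a2) * Real.exp (-4 * a3) /
      (1 - Real.exp (-a3 / a2) * Real.exp (-4 * a3))) ∧
    (a3 / a2) * (Real.exp (-a3 / a2) * Real.exp (-4 * a3) /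
      (1 - Real.exp (-a3 / a2) * Real.exp (-4 * a3))) ≤ 1 ∧
    0 ≤ (1 + 4 * a2) * (Real.exp (-a3 / a2) * Real.exp (-4 * a3) /
      (1 - Real.exp (-a3 / a2) * Real.exp (-4 * a3))) ∧
    (1 + 4 * a2) * (Real.exp (-a3 / a2) * Real.exp (-4 * a3) /
      (1 - Real.exp (-a3 / a2) * Real.exp (-4 * a3))) ≤ a2 / (a3 * (1 + 2 * a3)) := by
  have h2p : (0:ℝ) < a2 := by linarith
  have h3p : (0:ℝ) < a3 := by linarith
  have hx34 : 0.34 ≤ a3 / a2 + 4 * a3 := by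
    have : (0.1 : ℝ) ≤ a3 / a2 := by rw [le_div_iff₀ h2p]; linarith
    linarith
  obtain ⟨hEpos, h1E, h1E', hkey, hkey2⟩ := tail_core hx34
  have hE : Real.exp (-a3 / a2) * Real.exp (-4 * a3) = Real.exp (-(a3 / a2 + 4 * a3)) := by
    rw [← Real.exp_add]; congr 1; ring
  rw [hE]
  set x : ℝ := a3 / a2 + 4 * a3 with hxdef
  set E : ℝ := Real.exp (-x) with hEdef
  clear_value x E
  have hxpos : (0:ℝ) < x := by linarith
  refine ⟨hEpos, h1E, ?_, Real.log_nonpos (by linarith) (by linarith), ?_, ?_, ?_, ?_⟩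
  · rw [Real.le_log_iff_exp_le (by linarith)]
    have h15 : Real.exp (-1.5) = (Real.exp 1.5)⁻¹ := by rw [← Real.exp_neg]
    rw [h15, inv_le_iff_one_le_mul₀ (by positivity)]
    nlinarith [exp15_lb, Real.exp_pos (1.5:ℝ)]
  · exact mul_nonneg (by positivity) (div_nonneg hEpos.le h1E.le)
  · rw [mul_div_assoc', div_le_one h1E]
    have hle : a3 / a2 ≤ x := by
      have : 0 < a3 / a2 := by positivity
      rw [hxdef]; linarith
    nlinarith [mul_le_mul_of_nonneg_right hle hEpos.le, hkey]
  · exact mul_nonneg (by linarith) (div_nonneg hEpos.le h1E.le)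
  · have hxa2 : x * a2 = a3 * (1 + 4 * a2) := by
      rw [hxdef]; field_simp
    have h4a3 : 4 * a3 ≤ x := by
      have : 0 < a3 / a2 := by positivity
      rw [hxdef]; linarith
    have hstep : E * x * (1 + 2 * a3) ≤ 1 - E := by
      have h1 : E * x * (2 * a3) ≤ E * x * (x / 2) :=
        mul_le_mul_of_nonneg_left (by linarith) (by positivity)
      nlinarith [hkey2]
    rw [mul_div_assoc', div_le_div_iff₀ h1E (by positivity)]
    calc (1 + 4 * a2) * E * (a3 * (1 + 2 * a3))
        = (a3 * (1 + 4 * a2)) * (E * (1 + 2 * a3)) := by ring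
      _ = (x * a2) * (E * (1 + 2 * a3)) := by rw [hxa2]
      _ = a2 * (E * x * (1 + 2 * a3)) := by ring
      _ ≤ a2 * (1 - E) := mul_le_mul_of_nonneg_left hstep h2p.le
lemma ratio3 {a3 : ℝ} (h3 : 0 < a3) :
    4 * Real.exp (4 * a3) / (Real.exp (4 * a3) - 1) ≤ 4 + 1 / (a3 * (1 + 2 * a3)) := by
  have em := expm_pos h3
  set d : ℝ := a3 * (1 + 2 * a3) with hd
  have hdp : 0 < d := by positivity
  have hq : 4 * d ≤ Real.exp (4 * a3) - 1 := by
    have := Real.quadratic_le_exp_of_nonneg (by linarith : (0:ℝ) ≤ 4 * a3)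
    rw [hd]; nlinarith
  rw [div_le_iff₀ em]
  have key : 0 ≤ (1 / d) * (Real.exp (4 * a3) - 1 - 4 * d) :=
    mul_nonneg (by positivity) (by linarith)
  have hud : (1 / d) * d = 1 := by field_simp
  nlinarith [key, hud]

/-- At every point with `0.06 ≤ αᵢ ≤ 0.6` for `i = 0,1,2,3,4` (where
`α₄ = 1 - α₀ - α₁ - α₂ - α₃`), the logarithmic partial derivatives of `b` satisfy
`|(1/b) · ∂b/∂αᵢ| < 30` for each `i = 0,1,2,3`. -/
theorem statement18 (a0 a1 a2 a3 : ℝ)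
    (h0 : 0.06 ≤ a0 ∧ a0 ≤ 0.6) (h1 : 0.06 ≤ a1 ∧ a1 ≤ 0.6)
    (h2 : 0.06 ≤ a2 ∧ a2 ≤ 0.6) (h3 : 0.06 ≤ a3 ∧ a3 ≤ 0.6)
    (h4 : 0.06 ≤ 1 - a0 - a1 - a2 - a3 ∧ 1 - a0 - a1 - a2 - a3 ≤ 0.6) :
    |(bfun a0 a1 a2 a3)⁻¹ * deriv (fun t => bfun t a1 a2 a3) a0| < 30 ∧
    |(bfun a0 a1 a2 a3)⁻¹ * deriv (fun t => bfun a0 t a2 a3) a1| < 30 ∧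
    |(bfun a0 a1 a2 a3)⁻¹ * deriv (fun t => bfun a0 a1 t a3) a2| < 30 ∧
    |(bfun a0 a1 a2 a3)⁻¹ * deriv (fun t => bfun a0 a1 a2 t) a3| < 30 := by
  obtain ⟨h0l, h0u⟩ := h0
  obtain ⟨h1l, h1u⟩ := h1
  obtain ⟨h2l, h2u⟩ := h2
  obtain ⟨h3l, h3u⟩ := h3
  obtain ⟨h4l, h4u⟩ := h4
  have h0p : (0:ℝ) < a0 := by linarith
  have h1p : (0:ℝ) < a1 := by linarith
  have h2p : (0:ℝ) < a2 := by linarith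
  have h3p : (0:ℝ) < a3 := by linarith
  have h4p : (0:ℝ) < 1 - a0 - a1 - a2 - a3 := by linarith
  have hb := bfun_eq h0p h1p h2p h3p h4p
  obtain ⟨l0, l0'⟩ := log_bnd h0l h0u
  obtain ⟨l1, l1'⟩ := log_bnd h1l h1u
  obtain ⟨l2, l2'⟩ := log_bnd h2l h2u
  obtain ⟨l3, l3'⟩ := log_bnd h3l h3u
  obtain ⟨l4, l4'⟩ := log_bnd h4l h4u
  obtain ⟨e0l, e0u⟩ := logE_bnd h0l h0u
  obtain ⟨e1l, e1u⟩ := logE_bnd h1l h1u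
  obtain ⟨e2l, e2u⟩ := logE_bnd h2l h2u
  obtain ⟨e3l, e3u⟩ := logE_bnd h3l h3u
  obtain ⟨r0n, r0u⟩ := ratio_bnd h0l
  obtain ⟨r1n, r1u⟩ := ratio_bnd h1l
  obtain ⟨r2n, r2u⟩ := ratio_bnd h2l
  obtain ⟨r3n, r3u⟩ := ratio_bnd h3l
  obtain ⟨Ep, E1p, Ll, Lu, Tn, Tu, Qn, Qu⟩ := Efacts h2l h2u h3l h3u
  refine ⟨?_, ?_, ?_, ?_⟩
  · -- variable a0
    have hF := hasDerivAt_F0 (a1 := a1) (a2 := a2) (a3 := a3) h0p h4p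
    have hev : (fun t => bfun t a1 a2 a3) =ᶠ[nhds a0] fun t => Real.exp (Ffun t a1 a2 a3) := by
      filter_upwards [Ioo_mem_nhds h0p (by linarith : a0 < 1 - a1 - a2 - a3)] with t ht
      exact bfun_eq ht.1 h1p h2p h3p (by have := ht.2; simp only [Set.mem_Ioo] at ht; linarith [ht.2])
    rw [hev.deriv_eq, hF.exp.deriv, hb, inv_mul_cancel_left₀ (Real.exp_ne_zero _)]
    have hp : a1 * (4 * Real.exp (4 * a0) / (Real.exp (4 * a0) - 1)) ≤ 0.6 * (62 / 3) :=
      mul_le_mul h1u r0u r0n (by norm_num)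
    have hpn : 0 ≤ a1 * (4 * Real.exp (4 * a0) / (Real.exp (4 * a0) - 1)) :=
      mul_nonneg h1p.le r0n
    rw [abs_lt]
    constructor <;> linarith
  · -- variable a1
    have hF := hasDerivAt_F1 (a0 := a0) (a2 := a2) (a3 := a3) h1p h4p
    have hev : (fun t => bfun a0 t a2 a3) =ᶠ[nhds a1] fun t => Real.exp (Ffun a0 t a2 a3) := by
      filter_upwards [Ioo_mem_nhds h1p (by linarith : a1 < 1 - a0 - a2 - a3)] with t ht
      exact bfun_eq h0p ht.1 h2p h3p (by simp only [Set.mem_Ioo] at ht; linarith [ht.2])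
    rw [hev.deriv_eq, hF.exp.deriv, hb, inv_mul_cancel_left₀ (Real.exp_ne_zero _)]
    have hp : a2 * (4 * Real.exp (4 * a1) / (Real.exp (4 * a1) - 1)) ≤ 0.6 * (62 / 3) :=
      mul_le_mul h2u r1u r1n (by norm_num)
    have hpn : 0 ≤ a2 * (4 * Real.exp (4 * a1) / (Real.exp (4 * a1) - 1)) :=
      mul_nonneg h2p.le r1n
    rw [abs_lt]
    constructor <;> linarith
  · -- variable a2
    have hF := hasDerivAt_F2 (a0 := a0) (a1 := a1) h2p h3p h4p
    have hev : (fun t => bfun a0 a1 t a3) =ᶠ[nhds a2] fun t => Real.exp (Ffun a0 a1 t a3) := by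
      filter_upwards [Ioo_mem_nhds h2p (by linarith : a2 < 1 - a0 - a1 - a3)] with t ht
      exact bfun_eq h0p h1p ht.1 h3p (by simp only [Set.mem_Ioo] at ht; linarith [ht.2])
    rw [hev.deriv_eq, hF.exp.deriv, hb, inv_mul_cancel_left₀ (Real.exp_ne_zero _)]
    have hp : a3 * (4 * Real.exp (4 * a2) / (Real.exp (4 * a2) - 1)) ≤ 0.6 * (62 / 3) :=
      mul_le_mul h3u r2u r2n (by norm_num)
    have hpn : 0 ≤ a3 * (4 * Real.exp (4 * a2) / (Real.exp (4 * a2) - 1)) :=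
      mul_nonneg h3p.le r2n
    rw [abs_lt]
    constructor <;> linarith
  · -- variable a3
    have hF := hasDerivAt_F3 (a0 := a0) (a1 := a1) h2p h3p h4p
    have hev : (fun t => bfun a0 a1 a2 t) =ᶠ[nhds a3] fun t => Real.exp (Ffun a0 a1 a2 t) := by
      filter_upwards [Ioo_mem_nhds h3p (by linarith : a3 < 1 - a0 - a1 - a2)] with t ht
      exact bfun_eq h0p h1p h2p ht.1 (by simp only [Set.mem_Ioo] at ht; linarith [ht.2])
    rw [hev.deriv_eq, hF.exp.deriv, hb, inv_mul_cancel_left₀ (Real.exp_ne_zero _)]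
    have hr3 := ratio3 h3p
    have hA : (1 - a0 - a1 - a2 - a3) * (4 * Real.exp (4 * a3) / (Real.exp (4 * a3) - 1)) ≤
        4 * (1 - a0 - a1 - a2 - a3) + (1 - a0 - a1 - a2 - a3) / (a3 * (1 + 2 * a3)) := by
      have hm := mul_le_mul_of_nonneg_left hr3 h4p.le
      have heq : (1 - a0 - a1 - a2 - a3) * (4 + 1 / (a3 * (1 + 2 * a3))) =
          4 * (1 - a0 - a1 - a2 - a3) + (1 - a0 - a1 - a2 - a3) / (a3 * (1 + 2 * a3)) := by
        ring
      linarith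
    have hAn : 0 ≤ (1 - a0 - a1 - a2 - a3) * (4 * Real.exp (4 * a3) / (Real.exp (4 * a3) - 1)) :=
      mul_nonneg h4p.le r3n
    have hsum : (1 - a0 - a1 - a2 - a3) / (a3 * (1 + 2 * a3)) + a2 / (a3 * (1 + 2 * a3)) ≤ 12.3 := by
      rw [← add_div, div_le_iff₀ (by positivity)]
      nlinarith [sq_nonneg (a3 - 0.06)]
    rw [abs_lt]
    constructor <;> linarith
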